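/- (σx simulation by measurements of (X-Y)/√2, Z⊗X, (X-Y)/√2) Let |y_s⟩ = (|0⟩ + (-1)^s·e^{-iπ/4}|1⟩)/√2 for s ∈ {0,1}; these are unit eigenvectors of the observable (σx - σy)/√2 with eigenvalue (-1)^s. Work in ℂ²⊗ℂ² with the ancilla qubit a as the first tensor factor and the data qubit b as the second. For all s₁, s₂, s₃ ∈ {0,1} and every φ ∈ ℂ²: (|y_{s₃}⟩⟨y_{s₃}| ⊗ I) · ((I⊗I + (-1)^{s₂}·σz⊗σx)/2) · (|y_{s₁}⟩ ⊗ φ) = (-1)^{s₂·(s₁ XOR s₃)} · (1/2) · |y_{s₃}⟩ ⊗ (σx^{s₁ XOR s₃} φ). In particular the resulting data-qubit state is φ if s₁ = s₃ and σx·φ if s₁ ≠ s₃, each branch having squared norm ‖φ‖²/4. -/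

import Mathlib

open Matrix Complex
open scoped Real Kronecker

noncomputable section

/-- The Pauli matrix σx. -/
def σx : Matrix (Fin 2) (Fin 2) ℂ := !![0, 1; 1, 0]

/-- The Pauli matrix σy. -/
def σy : Matrix (Fin 2) (Fin 2) ℂ := !![0, -Complex.I; Complex.I, 0]

/-- The Pauli matrix σz. -/
def σz : Matrix (Fin 2) (Fin 2) ℂ := !![1, 0; 0, -1]

/-- The computational basis vector `|s⟩` of ℂ². -/
def ket (s : Fin 2) : Fin 2 → ℂ := fun i => if i = s then 1 else 0

/-- The eigenvector `|y_s⟩ = (|0⟩ + (-1)^s·e^{-iπ/4}|1⟩)/√2` of the observable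
`(σx - σy)/√2`, with eigenvalue `(-1)^s`. -/
def kety (s : Fin 2) : Fin 2 → ℂ := fun i =>
  if i = 0 then ((Real.sqrt 2 : ℂ))⁻¹
  else ((-1 : ℂ) ^ (s : ℕ)) * Complex.exp (-(Complex.I * (π / 4 : ℝ))) * ((Real.sqrt 2 : ℂ))⁻¹

/-- The rank-one projector `|y_s⟩⟨y_s|`. -/
def projy (s : Fin 2) : Matrix (Fin 2) (Fin 2) ℂ :=
  Matrix.of fun i j => kety s i * (starRingEnd ℂ) (kety s j)

/-- The tensor product of two vectors of ℂ². -/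
def tp (φ ψ : Fin 2 → ℂ) : Fin 2 × Fin 2 → ℂ := fun p => φ p.1 * ψ p.2

set_option maxHeartbeats 4000000 in
/-- Simulation of `σx` by the measurement sequence `((X-Y)/√2)_a`, `Z_a⊗X_b`,
`((X-Y)/√2)_a`: applying the projectors for outcomes `s₂` (observable `σz⊗σx`) and `s₃`
(observable `(σx-σy)/√2` on the ancilla `a`) to `|y_{s₁}⟩ ⊗ φ` yields
`(-1)^{s₂(s₁⊕s₃)}·(1/2)·|y_{s₃}⟩ ⊗ σx^{s₁⊕s₃} φ`;
in particular every branch has squared norm `‖φ‖²/4`. -/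
theorem sigma_x_simulation (s₁ s₂ s₃ : Fin 2) (φ : Fin 2 → ℂ) :
    ((projy s₃ ⊗ₖ (1 : Matrix (Fin 2) (Fin 2) ℂ)).mulVec
      (((2 : ℂ)⁻¹ • ((1 : Matrix (Fin 2 × Fin 2) (Fin 2 × Fin 2) ℂ)
          + ((-1 : ℂ) ^ (s₂ : ℕ)) • (σz ⊗ₖ σx))).mulVec
        (tp (kety s₁) φ))
      = (((-1 : ℂ) ^ ((s₂ : ℕ) * ((s₁ + s₃ : Fin 2) : ℕ))) * (2 : ℂ)⁻¹) •
          tp (kety s₃) ((σx ^ ((s₁ + s₃ : Fin 2) : ℕ)).mulVec φ)) ∧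
    (∑ p : Fin 2 × Fin 2,
        ‖((((-1 : ℂ) ^ ((s₂ : ℕ) * ((s₁ + s₃ : Fin 2) : ℕ))) * (2 : ℂ)⁻¹) •
          tp (kety s₃) ((σx ^ ((s₁ + s₃ : Fin 2) : ℕ)).mulVec φ)) p‖ ^ 2
      = (∑ i : Fin 2, ‖φ i‖ ^ 2) / 4) := by
  have hcsq : Complex.exp (-(Complex.I * (π / 4 : ℝ))) * Complex.exp (-(Complex.I * (π / 4 : ℝ)))
      = -Complex.I := by
    rw [← Complex.exp_add]
    have : (-(Complex.I * (π / 4 : ℝ))) + (-(Complex.I * (π / 4 : ℝ)))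
        = -(π/2 : ℝ) * Complex.I := by push_cast; ring
    rw [this, Complex.exp_mul_I]
    push_cast
    simp [Real.cos_pi_div_two, Real.sin_pi_div_two]
  have hc2 : (starRingEnd ℂ) (Complex.exp (-(Complex.I * (π / 4 : ℝ))))
      = Complex.I * Complex.exp (-(Complex.I * (π / 4 : ℝ))) := by
    rw [← Complex.exp_conj]
    rw [show (starRingEnd ℂ) (-(Complex.I * (π / 4 : ℝ))) = Complex.I * (π / 4 : ℝ) by
      simp only [map_neg, _root_.map_mul, Complex.conj_I, Complex.conj_ofReal]; ring]
    rw [show Complex.I * ((π / 4 : ℝ):ℂ) = (-(Complex.I * (π / 4 : ℝ))) + (π/2 : ℝ) * Complex.I by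
      push_cast; ring]
    rw [Complex.exp_add, Complex.exp_mul_I]
    push_cast
    simp [Real.cos_pi_div_two, Real.sin_pi_div_two]
    ring_nf
  have hu : ((Real.sqrt 2 : ℂ))⁻¹ * ((Real.sqrt 2 : ℂ))⁻¹ = 2⁻¹ := by
    rw [← mul_inv, ← Complex.ofReal_mul, Real.mul_self_sqrt (by norm_num)]
    norm_num
  have hu3 : ((Real.sqrt 2 : ℂ))⁻¹ ^ 3 = 2⁻¹ * ((Real.sqrt 2 : ℂ))⁻¹ := by
    rw [pow_succ, pow_two, hu]
  have hc3 : Complex.exp (-(Complex.I * (π / 4 : ℝ))) ^ 3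
      = -Complex.I * Complex.exp (-(Complex.I * (π / 4 : ℝ))) := by
    rw [pow_succ, pow_two, hcsq]
  have hnc : ‖Complex.exp (-(Complex.I * (π / 4 : ℝ)))‖ = 1 := by
    rw [Complex.norm_exp]
    norm_num [Complex.neg_re, Complex.mul_re]
  have hnu : ‖((Real.sqrt 2 : ℂ))⁻¹‖ ^ 2 = 2⁻¹ := by
    rw [norm_inv, Complex.norm_real]
    rw [Real.norm_eq_abs, _root_.abs_of_nonneg (Real.sqrt_nonneg 2)]
    rw [inv_pow, Real.sq_sqrt (by norm_num)]
  have hn2 : ‖(2:ℂ)‖⁻¹ ^ 2 = (4:ℝ)⁻¹ := by norm_num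
  have hnsi : ‖((Real.sqrt 2 : ℝ):ℂ)‖⁻¹ ^ 2 = (2:ℝ)⁻¹ := by
    rw [Complex.norm_real, Real.norm_eq_abs, _root_.abs_of_nonneg (Real.sqrt_nonneg 2),
      inv_pow, Real.sq_sqrt (by norm_num)]
  constructor
  · fin_cases s₁ <;> fin_cases s₂ <;> fin_cases s₃ <;>
    · funext p; fin_cases p <;>
      · simp only [Matrix.mulVec, dotProduct, Fintype.sum_prod_type, Fin.sum_univ_two,
          projy, kety, tp, σx, σz, Matrix.kroneckerMap_apply, Matrix.one_apply, Matrix.smul_apply,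
          Matrix.add_apply, Matrix.of_apply, Matrix.cons_val', Matrix.cons_val_zero,
          Matrix.cons_val_one, Matrix.head_cons, Matrix.head_fin_const, Matrix.empty_val',
          Matrix.cons_val_fin_one, smul_eq_mul, Pi.smul_apply, Prod.mk.injEq, pow_zero, pow_one,
          pow_succ, map_neg, _root_.map_one, _root_.map_mul, map_inv₀, Complex.conj_ofReal,
          reduceIte, Fin.isValue, one_mul, mul_one, neg_mul, mul_neg, neg_neg, zero_mul, mul_zero,
          add_zero, zero_add, one_ne_zero, Fin.zero_eta, Fin.mk_one, hc2, Fin.val_zero,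
          Fin.val_one, and_self, and_true, true_and, and_false, false_and, if_true, if_false,
          Fin.reduceEq, zero_ne_one, Fin.reduceAdd, show ((2:Fin 2):ℕ) = 0 from rfl,
          Nat.mul_zero, Nat.zero_mul, Nat.mul_one, Nat.one_mul]
        ring_nf
        ring_nf at hcsq hu hu3 hc3
        try simp only [← pow_two] at hcsq hu ⊢
        try simp only [hcsq, hc3, hu, hu3, Complex.I_sq]
        try ring_nf
        try simp only [← pow_two, hcsq, hc3, hu, hu3, Complex.I_sq]
        try ring_nf
  · fin_cases s₁ <;> fin_cases s₂ <;> fin_cases s₃ <;>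
    · simp only [Fintype.sum_prod_type, Fin.sum_univ_two, Pi.smul_apply, smul_eq_mul,
        norm_mul, mul_pow, tp, kety, Matrix.mulVec, dotProduct, σx, pow_zero, pow_one,
        Matrix.one_mulVec, Matrix.cons_val', Matrix.cons_val_zero, Matrix.cons_val_one,
        Matrix.head_cons, Matrix.empty_val', Matrix.cons_val_fin_one, Matrix.head_fin_const,
        Fin.isValue, Fin.val_zero, Fin.val_one, reduceIte, Fin.reduceEq, one_mul, mul_one,
        zero_mul, mul_zero, add_zero, zero_add, norm_one, norm_neg, one_pow, hnc, hnu,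
        Matrix.one_apply, neg_mul, if_true, if_false, one_ne_zero, zero_ne_one, norm_inv,
        norm_pow, Fin.reduceAdd, Fin.reduceMul, show ((2:Fin 2):ℕ) = 0 from rfl,
        Fin.zero_eta, Fin.mk_one, norm_zero,
        Nat.mul_zero, Nat.zero_mul, Nat.mul_one, Nat.one_mul]
      ring_nf
      try simp only [← pow_two, hnu, hnc, hn2, hnsi, norm_zero, norm_one, one_mul, mul_one,
        zero_mul, mul_zero, add_zero, zero_add, one_pow]
      try ring_nf
      try simp only [← pow_two, hnu, hnc, hn2, hnsi, one_pow]
      try ring_nf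
      try norm_num [Matrix.cons_val', Matrix.cons_val_zero, Matrix.cons_val_one,
        Matrix.head_cons, Matrix.empty_val', Matrix.cons_val_fin_one, Matrix.head_fin_const,
        Matrix.of_apply, add_comm]
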